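/- Let x ∈ ℝ^V be a nonnegative nonzero vector on the vertices of a weighted graph G=(V,E,μ,w). Then there exists t with 0 ≤ t < max_v x_v such that Φ₁(x) ≥ φ(Bᵗ), where Bᵗ = {v ∈ V : x_v > t} is the superlevel set, Φ₁(x) = Σ_{{u,v}∈E} w_{uv}|x_u-x_v| / Σ_v μ_v x_v, and φ(B) = w(∂B)/μ(B). -/

import Mathlib

open Finset MeasureTheory intervalIntegral

lemma indIntegrable (a b A B : ℝ) :
    IntervalIntegrable (fun t => if a ≤ t ∧ t < b then (1:ℝ) else 0) volume A B := by
  have : (fun t => if a ≤ t ∧ t < b then (1:ℝ) else 0) = (Set.Ico a b).indicator (fun _ => 1) := by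
    ext t; simp [Set.indicator, Set.mem_Ico]
  rw [this]
  exact (MeasureTheory.integrable_indicator_iff measurableSet_Ico |>.mpr
    ((integrableOn_const_iff (C := (1:ℝ))).mpr (Or.inr measure_Ico_lt_top))).intervalIntegrable

lemma indIntegral {M a b : ℝ} (ha : 0 ≤ a) (hb : b ≤ M) (hM : 0 ≤ M) :
    ∫ t in (0:ℝ)..M, (if a ≤ t ∧ t < b then (1:ℝ) else 0) = max (b - a) 0 := by
  have h1 : (fun t => if a ≤ t ∧ t < b then (1:ℝ) else 0) = (Set.Ico a b).indicator (fun _ => 1) := by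
    ext t; simp [Set.indicator, Set.mem_Ico]
  rw [h1, integral_of_le hM, setIntegral_indicator measurableSet_Ico, setIntegral_const]
  rcases le_or_gt b a with h | h
  · rw [max_eq_right (by linarith), Set.Ico_eq_empty (by exact not_lt.mpr h)]
    simp
  · rw [max_eq_left (by linarith)]
    have hsub1 : Set.Ioo a b ⊆ Set.Ioc 0 M ∩ Set.Ico a b := by
      intro t ht
      exact ⟨⟨lt_of_le_of_lt ha ht.1, le_trans ht.2.le hb⟩, ht.1.le, ht.2⟩
    have hsub2 : Set.Ioc 0 M ∩ Set.Ico a b ⊆ Set.Icc a b := fun t ht => ⟨ht.2.1, ht.2.2.le⟩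
    have hv : volume (Set.Ioc 0 M ∩ Set.Ico a b) = ENNReal.ofReal (b - a) := by
      refine le_antisymm ?_ ?_
      · calc volume (Set.Ioc 0 M ∩ Set.Ico a b) ≤ volume (Set.Icc a b) := measure_mono hsub2
          _ = ENNReal.ofReal (b - a) := Real.volume_Icc
      · calc ENNReal.ofReal (b - a) = volume (Set.Ioo a b) := Real.volume_Ioo.symm
          _ ≤ _ := measure_mono hsub1
    rw [measureReal_def, hv]
    simp [ENNReal.toReal_ofReal (by linarith : (0:ℝ) ≤ b - a)]

lemma max_sub_add : ∀ a b : ℝ, max (a - b) 0 + max (b - a) 0 = |a - b| := by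
  intro a b
  rcases le_total a b with h | h
  · rw [max_eq_right (by linarith), max_eq_left (by linarith), abs_of_nonpos (by linarith)]
    ring
  · rw [max_eq_left (by linarith), max_eq_right (by linarith), abs_of_nonneg (by linarith)]
    ring

lemma intervalIntegrable_sum' {ι : Type*} (s : Finset ι) {a b : ℝ} (F : ι → ℝ → ℝ)
    (h : ∀ i ∈ s, IntervalIntegrable (F i) volume a b) :
    IntervalIntegrable (fun t => ∑ i ∈ s, F i t) volume a b := by
  have h2 : (fun t => ∑ i ∈ s, F i t) = ∑ i ∈ s, F i := by
    funext t; simp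
  rw [h2]
  exact IntervalIntegrable.sum s h

variable {V : Type*}

noncomputable def bdryW [Fintype V] [DecidableEq V] (G : SimpleGraph V) [DecidableRel G.Adj]
    (w : Sym2 V → ℝ) (A : Finset V) : ℝ :=
  ∑ u ∈ A, ∑ v ∈ Aᶜ, if G.Adj u v then w s(u, v) else 0

noncomputable def vol [Fintype V] (μ : V → ℝ) (A : Finset V) : ℝ := ∑ v ∈ A, μ v

noncomputable def phi [Fintype V] [DecidableEq V] (G : SimpleGraph V) [DecidableRel G.Adj]
    (μ : V → ℝ) (w : Sym2 V → ℝ) (A : Finset V) : ℝ := bdryW G w A / vol μ A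

/-- The L¹-Rayleigh quotient Φ₁. -/
noncomputable def Phi1 [Fintype V] [DecidableEq V] (G : SimpleGraph V) [DecidableRel G.Adj]
    (μ : V → ℝ) (w : Sym2 V → ℝ) (x : V → ℝ) : ℝ :=
  ((∑ u, ∑ v, if G.Adj u v then w s(u, v) * |x u - x v| else 0) / 2) / (∑ v, μ v * |x v|)

/-- The indicator vector of a finite set of vertices. -/
def indVec [DecidableEq V] (A : Finset V) : V → ℝ := fun v => if v ∈ A then 1 else 0


theorem layer_cake_level_set [Fintype V] [DecidableEq V] [Nonempty V]
    (G : SimpleGraph V) [DecidableRel G.Adj]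
    (μ : V → ℝ) (w : Sym2 V → ℝ) (hμ : ∀ v, 0 < μ v) (hw : ∀ e ∈ G.edgeSet, 0 < w e)
    (x : V → ℝ) (hx : ∀ v, 0 ≤ x v) (hx0 : x ≠ 0) :
    ∃ t : ℝ, 0 ≤ t ∧ t < Finset.univ.sup' Finset.univ_nonempty x ∧
      phi G μ w (Finset.univ.filter (fun v => t < x v)) ≤ Phi1 G μ w x := by
  set M := Finset.univ.sup' Finset.univ_nonempty x with hMdef
  have hxM : ∀ v, x v ≤ M := fun v => Finset.le_sup' x (mem_univ v)
  have hM : 0 < M := by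
    obtain ⟨v, hv⟩ : ∃ v, x v ≠ 0 := Function.ne_iff.mp hx0
    exact lt_of_lt_of_le (lt_of_le_of_ne (hx v) (Ne.symm hv)) (hxM v)
  set W : V → V → ℝ := fun u v => if G.Adj u v then w s(u, v) else 0 with hWdef
  have hWsymm : ∀ u v, W u v = W v u := by
    intro u v
    simp only [hWdef]
    rw [Sym2.eq_swap]
    by_cases h : G.Adj u v
    · rw [if_pos h, if_pos h.symm]
    · rw [if_neg h, if_neg (fun h' => h h'.symm)]
  set f : ℝ → ℝ := fun t => ∑ u, ∑ v, W u v * (if x v ≤ t ∧ t < x u then 1 else 0) with hfdef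
  set g : ℝ → ℝ := fun t => ∑ v, μ v * (if 0 ≤ t ∧ t < x v then 1 else 0) with hgdef
  -- level set identification
  have hfB : ∀ t : ℝ, 0 ≤ t →
      f t = ∑ u ∈ univ.filter (fun v => t < x v), ∑ v ∈ (univ.filter (fun v => t < x v))ᶜ,
        if G.Adj u v then w s(u, v) else 0 := by
    intro t ht
    rw [Finset.compl_filter]
    rw [Finset.sum_filter]
    simp only [hfdef]
    refine Finset.sum_congr rfl fun u _ => ?_
    rw [Finset.sum_filter]
    by_cases hu : t < x u
    · rw [if_pos hu]
      refine Finset.sum_congr rfl fun v _ => ?_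
      by_cases hv : t < x v
      · rw [if_neg (not_not_intro hv), if_neg (fun h => absurd h.1 (not_le.mpr hv)), mul_zero]
      · rw [if_pos hv, if_pos ⟨not_lt.mp hv, hu⟩, mul_one]
    · rw [if_neg hu]
      refine (Finset.sum_eq_zero fun v _ => ?_)
      rw [if_neg (fun h => hu h.2), mul_zero]
  have hgB : ∀ t : ℝ, 0 ≤ t →
      g t = ∑ v ∈ univ.filter (fun v => t < x v), μ v := by
    intro t ht
    rw [Finset.sum_filter]
    refine Finset.sum_congr rfl fun v _ => ?_
    by_cases hv : t < x v
    · rw [if_pos hv, if_pos ⟨ht, hv⟩, mul_one]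
    · rw [if_neg hv, if_neg (fun h => hv h.2), mul_zero]
  -- integrability
  have hfi : IntervalIntegrable f volume 0 M := by
    refine intervalIntegrable_sum' univ _ fun u _ => intervalIntegrable_sum' univ _ fun v _ => ?_
    exact (indIntegrable (x v) (x u) 0 M).const_mul _
  have hgi : IntervalIntegrable g volume 0 M := by
    refine intervalIntegrable_sum' univ _ fun v _ => ?_
    exact (indIntegrable 0 (x v) 0 M).const_mul _
  -- integral of g
  have hDpos : 0 < ∑ v, μ v * x v := by
    obtain ⟨v0, hv0⟩ : ∃ v, x v ≠ 0 := Function.ne_iff.mp hx0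
    refine Finset.sum_pos' (fun v _ => mul_nonneg (hμ v).le (hx v)) ⟨v0, mem_univ v0, ?_⟩
    exact mul_pos (hμ v0) (lt_of_le_of_ne (hx v0) (Ne.symm hv0))
  have hIg : ∫ t in (0:ℝ)..M, g t = ∑ v, μ v * x v := by
    simp only [hgdef]
    rw [intervalIntegral.integral_finset_sum
      (fun v _ => (indIntegrable 0 (x v) 0 M).const_mul _)]
    refine Finset.sum_congr rfl fun v _ => ?_
    rw [intervalIntegral.integral_const_mul, indIntegral le_rfl (hxM v) hM.le,
      sub_zero, max_eq_left (hx v)]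
  -- integral of f
  have hIf : ∫ t in (0:ℝ)..M, f t =
      (∑ u, ∑ v, if G.Adj u v then w s(u, v) * |x u - x v| else 0) / 2 := by
    have h1 : ∫ t in (0:ℝ)..M, f t = ∑ u, ∑ v, W u v * max (x u - x v) 0 := by
      simp only [hfdef]
      rw [intervalIntegral.integral_finset_sum (fun u _ =>
        intervalIntegrable_sum' univ _ fun v _ => (indIntegrable (x v) (x u) 0 M).const_mul _)]
      refine Finset.sum_congr rfl fun u _ => ?_
      rw [intervalIntegral.integral_finset_sum
        (fun v _ => (indIntegrable (x v) (x u) 0 M).const_mul _)]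
      refine Finset.sum_congr rfl fun v _ => ?_
      rw [intervalIntegral.integral_const_mul, indIntegral (hx v) (hxM u) hM.le]
    rw [h1]
    have h2 : ∑ u, ∑ v, W u v * max (x u - x v) 0 = ∑ u, ∑ v, W u v * max (x v - x u) 0 := by
      rw [Finset.sum_comm]
      exact Finset.sum_congr rfl fun u _ => Finset.sum_congr rfl fun v _ => by rw [hWsymm]
    have h3 : ∀ u v, (if G.Adj u v then w s(u, v) * |x u - x v| else 0) = W u v * |x u - x v| := by
      intro u v
      simp only [hWdef, ite_mul, zero_mul]
    have : (∑ u, ∑ v, if G.Adj u v then w s(u, v) * |x u - x v| else 0)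
        = 2 * ∑ u, ∑ v, W u v * max (x u - x v) 0 := by
      calc (∑ u, ∑ v, if G.Adj u v then w s(u, v) * |x u - x v| else 0)
          = ∑ u, ∑ v, W u v * |x u - x v| := by
            exact Finset.sum_congr rfl fun u _ => Finset.sum_congr rfl fun v _ => h3 u v
        _ = ∑ u, ∑ v, (W u v * max (x u - x v) 0 + W u v * max (x v - x u) 0) := by
            refine Finset.sum_congr rfl fun u _ => Finset.sum_congr rfl fun v _ => ?_
            rw [← mul_add, max_sub_add]
        _ = (∑ u, ∑ v, W u v * max (x u - x v) 0) + ∑ u, ∑ v, W u v * max (x v - x u) 0 := by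
            rw [← Finset.sum_add_distrib]
            exact Finset.sum_congr rfl fun u _ => Finset.sum_add_distrib
        _ = 2 * ∑ u, ∑ v, W u v * max (x u - x v) 0 := by rw [← h2]; ring
    rw [this]
    ring
  -- endgame
  by_contra hcon
  push_neg at hcon
  obtain ⟨v1, -, hv1⟩ := Finset.exists_mem_eq_sup' (Finset.univ_nonempty (α := V)) x
  have key : ∀ t ∈ Set.Ioo (0:ℝ) M, 0 < f t - Phi1 G μ w x * g t := by
    intro t ht
    have hB : v1 ∈ univ.filter (fun v => t < x v) := by
      simp only [mem_filter]
      exact ⟨mem_univ _, by rw [← hv1]; exact ht.2⟩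
    have hgt : 0 < g t := by
      rw [hgB t ht.1.le]
      exact Finset.sum_pos (fun v _ => hμ v) ⟨v1, hB⟩
    have hphi := hcon t ht.1.le ht.2
    simp only [phi, bdryW, vol] at hphi
    rw [← hfB t ht.1.le, ← hgB t ht.1.le] at hphi
    have := (lt_div_iff₀ hgt).mp hphi
    linarith
  have hpos : 0 < ∫ t in (0:ℝ)..M, (f t - Phi1 G μ w x * g t) :=
    intervalIntegral_pos_of_pos_on (hfi.sub (hgi.const_mul _)) key hM
  have hint : ∫ t in (0:ℝ)..M, (f t - Phi1 G μ w x * g t) = 0 := by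
    rw [intervalIntegral.integral_sub hfi (hgi.const_mul _),
      intervalIntegral.integral_const_mul, hIf, hIg]
    have hD' : (∑ v, μ v * |x v|) = ∑ v, μ v * x v :=
      Finset.sum_congr rfl fun v _ => by rw [abs_of_nonneg (hx v)]
    rw [Phi1, hD', div_mul_cancel₀ _ hDpos.ne', sub_self]
  linarith
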